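/- Let λ₁, …, λₙ ∈ 𝔻 with max_j |λ_j| ≤ r < 1, let B be the associated Blaschke product, and let f ∈ K_B = H² ⊖ BH². Then ‖f'‖_{H²} ≤ (3n/(1-r))·‖f‖_{H²}. -/

import Mathlib

open Complex Metric

noncomputable def blaschke6 (l z : ℂ) : ℂ := (l - z) / (1 - (starRingEnd ℂ) l * z)

/-- The Malmquist basis of the model space `K_B`. -/
noncomputable def malmquist6 (n : ℕ) (l : Fin n → ℂ) (k : Fin n) (z : ℂ) : ℂ :=
  (∏ j ∈ Finset.univ.filter (fun j => j < k), blaschke6 (l j) z) *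
    ((Real.sqrt (1 - ‖l k‖ ^ 2) : ℂ) / (1 - (starRingEnd ℂ) (l k) * z))

namespace Stmt6Aux

noncomputable def circ (θ : ℝ) : ℂ := Complex.exp (θ * Complex.I)

lemma norm_circ (θ : ℝ) : ‖circ θ‖ = 1 := by
  simp [circ, Complex.norm_exp_ofReal_mul_I]

lemma circ_ne_zero (θ : ℝ) : circ θ ≠ 0 := by
  intro h
  have := norm_circ θ
  rw [h] at this
  simp at this

lemma cont_circ : Continuous circ :=
  Complex.continuous_exp.comp (Complex.continuous_ofReal.mul continuous_const)

lemma one_sub_ne {x : ℂ} (h : ‖x‖ < 1) : 1 - x ≠ 0 := by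
  intro h0
  have : (1:ℂ) = x := by linear_combination h0
  rw [← this] at h
  simp at h

lemma den_ne {a z : ℂ} (ha : ‖a‖ < 1) (hz : ‖z‖ ≤ 1) : 1 - (starRingEnd ℂ) a * z ≠ 0 := by
  apply one_sub_ne
  rw [norm_mul, RCLike.norm_conj]
  calc ‖a‖ * ‖z‖ ≤ ‖a‖ * 1 := by
        apply mul_le_mul_of_nonneg_left hz (norm_nonneg a)
    _ < 1 := by simpa using ha

lemma den_norm_ge {a z : ℂ} (hz : ‖z‖ ≤ 1) : 1 - ‖a‖ ≤ ‖1 - (starRingEnd ℂ) a * z‖ := by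
  have h1 : ‖(1:ℂ)‖ - ‖(starRingEnd ℂ) a * z‖ ≤ ‖1 - (starRingEnd ℂ) a * z‖ :=
    norm_sub_norm_le _ _
  have h2 : ‖(starRingEnd ℂ) a * z‖ ≤ ‖a‖ := by
    rw [norm_mul, RCLike.norm_conj]
    calc ‖a‖ * ‖z‖ ≤ ‖a‖ * 1 := mul_le_mul_of_nonneg_left hz (norm_nonneg a)
      _ = ‖a‖ := mul_one _
  simp only [norm_one] at h1
  linarith

lemma conj_circ (θ : ℝ) : (starRingEnd ℂ) (circ θ) = (circ θ)⁻¹ := by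
  have h : circ θ * (starRingEnd ℂ) (circ θ) = 1 := by
    rw [Complex.mul_conj]
    norm_cast
    rw [Complex.normSq_eq_norm_sq, norm_circ]
    norm_num
  field_simp [circ_ne_zero θ] at h ⊢
  linear_combination h

lemma conj_unimod {x : ℂ} (h : ‖x‖ = 1) : (starRingEnd ℂ) x = x⁻¹ := by
  have hx : x ≠ 0 := by intro h0; rw [h0] at h; simp at h
  have hm : x * (starRingEnd ℂ) x = 1 := by
    rw [Complex.mul_conj]
    norm_cast
    rw [Complex.normSq_eq_norm_sq, h]
    norm_num
  field_simp at hm ⊢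
  linear_combination hm

lemma norm_blaschke {a z : ℂ} (hz : ‖z‖ = 1) (h : 1 - (starRingEnd ℂ) a * z ≠ 0) :
    ‖blaschke6 a z‖ = 1 := by
  have hcz : (starRingEnd ℂ) z * z = 1 := by
    rw [mul_comm, Complex.mul_conj]
    norm_cast
    rw [Complex.normSq_eq_norm_sq, hz]
    norm_num
  have key : 1 - (starRingEnd ℂ) a * z = -((starRingEnd ℂ) (a - z) * z) := by
    rw [map_sub]
    linear_combination -hcz
  have hn : ‖1 - (starRingEnd ℂ) a * z‖ = ‖a - z‖ := by
    rw [key, norm_neg, norm_mul, RCLike.norm_conj, hz, mul_one]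
  rw [blaschke6, norm_div, hn, div_self]
  rw [← hn]
  exact norm_ne_zero_iff.mpr h

lemma blaschke_ne_zero {a z : ℂ} (hz : ‖z‖ = 1) (h : 1 - (starRingEnd ℂ) a * z ≠ 0) :
    blaschke6 a z ≠ 0 := by
  intro h0
  have := norm_blaschke hz h
  rw [h0] at this
  simp at this



noncomputable def bder (a z : ℂ) : ℂ :=
  ((starRingEnd ℂ) a * a - 1) / (1 - (starRingEnd ℂ) a * z) ^ 2

noncomputable def wf (a z : ℂ) : ℂ :=
  (Real.sqrt (1 - ‖a‖ ^ 2) : ℂ) / (1 - (starRingEnd ℂ) a * z)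

noncomputable def wder (a z : ℂ) : ℂ :=
  (Real.sqrt (1 - ‖a‖ ^ 2) : ℂ) * (starRingEnd ℂ) a / (1 - (starRingEnd ℂ) a * z) ^ 2

lemma hasDerivAt_den (a z : ℂ) :
    HasDerivAt (fun w => 1 - (starRingEnd ℂ) a * w) (-(starRingEnd ℂ) a) z := by
  simpa using ((hasDerivAt_id z).const_mul ((starRingEnd ℂ) a)).const_sub 1

lemma hasDerivAt_blaschke {a z : ℂ} (h : 1 - (starRingEnd ℂ) a * z ≠ 0) :
    HasDerivAt (blaschke6 a) (bder a z) z := by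
  have h1 : HasDerivAt (fun w : ℂ => a - w) (-1) z := by
    simpa using (hasDerivAt_id z).const_sub a
  have := h1.fun_div (hasDerivAt_den a z) h
  apply this.congr_deriv
  rw [bder]
  field_simp
  ring

lemma hasDerivAt_wf {a z : ℂ} (h : 1 - (starRingEnd ℂ) a * z ≠ 0) :
    HasDerivAt (wf a) (wder a z) z := by
  have h1 : HasDerivAt (fun _ : ℂ => (Real.sqrt (1 - ‖a‖ ^ 2) : ℂ)) 0 z := hasDerivAt_const _ _
  have := h1.fun_div (hasDerivAt_den a z) h
  apply this.congr_deriv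
  rw [wder]
  field_simp
  ring



noncomputable def mder (n : ℕ) (l : Fin n → ℂ) (k : Fin n) (z : ℂ) : ℂ :=
  (∑ j ∈ Finset.univ.filter (fun j => j < k),
      (∏ i ∈ (Finset.univ.filter (fun j => j < k)).erase j, blaschke6 (l i) z) * bder (l j) z) *
      wf (l k) z
  + (∏ j ∈ Finset.univ.filter (fun j => j < k), blaschke6 (l j) z) * wder (l k) z

lemma hasDerivAt_malm (n : ℕ) (l : Fin n → ℂ) (k : Fin n) {z : ℂ}
    (h : ∀ j : Fin n, 1 - (starRingEnd ℂ) (l j) * z ≠ 0) :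
    HasDerivAt (malmquist6 n l k) (mder n l k z) z := by
  have hp := HasDerivAt.fun_finsetProd (u := Finset.univ.filter (fun j => j < k))
      (f := fun j w => blaschke6 (l j) w) (f' := fun j => bder (l j) z) (x := z)
      (fun j _ => hasDerivAt_blaschke (h j))
  have hw := hasDerivAt_wf (a := l k) (h k)
  have hm := hp.fun_mul hw
  have : malmquist6 n l k = fun w =>
      (∏ j ∈ Finset.univ.filter (fun j => j < k), blaschke6 (l j) w) * wf (l k) w := rfl
  rw [this, mder]
  exact hm.congr_deriv (by simp only [smul_eq_mul])

lemma circ_sub_ne {a : ℂ} (ha : ‖a‖ < 1) (θ : ℝ) : circ θ - a ≠ 0 := by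
  intro h0
  have : circ θ = a := by linear_combination h0
  rw [← this] at ha
  rw [norm_circ] at ha
  exact lt_irrefl _ ha

lemma cauchy (g : ℂ → ℂ) (hg : ∀ z : ℂ, ‖z‖ ≤ 1 → DifferentiableAt ℂ g z) {a : ℂ}
    (ha : ‖a‖ < 1) :
    ∫ θ in (0:ℝ)..(2*Real.pi), circ θ * g (circ θ) / (circ θ - a)
      = ((2*Real.pi : ℝ) : ℂ) * g a := by
  have hmem : a ∈ ball (0:ℂ) 1 := by
    rw [mem_ball_zero_iff]; exact ha
  have h := Complex.circleIntegral_sub_inv_smul_of_differentiable_on_off_countable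
      (s := (∅ : Set ℂ)) Set.countable_empty hmem
      (fun z hz => ((hg z (by rwa [mem_closedBall_zero_iff] at hz)).continuousAt).continuousWithinAt)
      (fun x hx => hg x (le_of_lt (by rw [← mem_ball_zero_iff]; exact hx.1)))
  rw [circleIntegral] at h
  simp only [deriv_circleMap, circleMap_zero, Complex.ofReal_one, one_mul, smul_eq_mul] at h
  have key : ∀ θ : ℝ, circ θ * g (circ θ) / (circ θ - a)
      = Complex.I⁻¹ * (Complex.exp (θ * Complex.I) * Complex.I *
          ((Complex.exp (θ * Complex.I) - a)⁻¹ * g (Complex.exp (θ * Complex.I)))) := by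
    intro θ
    have hne : circ θ - a ≠ 0 := circ_sub_ne ha θ
    rw [circ] at hne ⊢
    field_simp
  rw [intervalIntegral.integral_congr (fun θ _ => key θ),
    intervalIntegral.integral_const_mul, h]
  field_simp
  push_cast
  ring


lemma diffAt_blaschke {a z : ℂ} (h : 1 - (starRingEnd ℂ) a * z ≠ 0) :
    DifferentiableAt ℂ (blaschke6 a) z := (hasDerivAt_blaschke h).differentiableAt

lemma diffAt_wf {a z : ℂ} (h : 1 - (starRingEnd ℂ) a * z ≠ 0) :
    DifferentiableAt ℂ (wf a) z := (hasDerivAt_wf h).differentiableAt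

lemma conj_malm (n : ℕ) (l : Fin n → ℂ) (hl : ∀ j, ‖l j‖ < 1) (m : Fin n) (θ : ℝ) :
    (starRingEnd ℂ) (malmquist6 n l m (circ θ)) =
      (∏ j ∈ Finset.univ.filter (fun j => j < m), blaschke6 (l j) (circ θ))⁻¹ *
        ((Real.sqrt (1 - ‖l m‖ ^ 2) : ℂ) * circ θ / (circ θ - l m)) := by
  rw [malmquist6, map_mul, map_prod]
  have h1 : ∀ j : Fin n, (starRingEnd ℂ) (blaschke6 (l j) (circ θ))
      = (blaschke6 (l j) (circ θ))⁻¹ := fun j =>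
    conj_unimod (norm_blaschke (norm_circ θ) (den_ne (hl j) (le_of_eq (norm_circ θ))))
  rw [Finset.prod_congr rfl (fun j _ => h1 j), ← Finset.prod_inv_distrib]
  congr 1
  have h2 : circ θ - l m ≠ 0 := circ_sub_ne (hl m) θ
  have h0 : circ θ ≠ 0 := circ_ne_zero θ
  rw [map_div₀, map_sub, map_one, map_mul, Complex.conj_conj, conj_circ]
  rw [Complex.conj_ofReal]
  field_simp

lemma orth_le (n : ℕ) (l : Fin n → ℂ) {r : ℝ} (hr : r < 1) (hl : ∀ j, ‖l j‖ ≤ r)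
    (k m : Fin n) (hmk : m ≤ k) :
    ∫ θ in (0:ℝ)..(2*Real.pi),
        malmquist6 n l k (circ θ) * (starRingEnd ℂ) (malmquist6 n l m (circ θ))
      = if k = m then ((2*Real.pi : ℝ) : ℂ) else 0 := by
  have hl1 : ∀ j, ‖l j‖ < 1 := fun j => lt_of_le_of_lt (hl j) hr
  set S := Finset.univ.filter (fun j : Fin n => j < k) \
    Finset.univ.filter (fun j : Fin n => j < m) with hS
  set G : ℂ → ℂ := fun z => (Real.sqrt (1 - ‖l m‖ ^ 2) : ℂ) *
    ((∏ j ∈ S, blaschke6 (l j) z) * wf (l k) z) with hG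
  have hsub : Finset.univ.filter (fun j : Fin n => j < m) ⊆
      Finset.univ.filter (fun j : Fin n => j < k) := by
    intro j hj
    simp only [Finset.mem_filter] at *
    exact ⟨hj.1, lt_of_lt_of_le hj.2 hmk⟩
  have point : ∀ θ : ℝ, malmquist6 n l k (circ θ) *
      (starRingEnd ℂ) (malmquist6 n l m (circ θ)) = circ θ * G (circ θ) / (circ θ - l m) := by
    intro θ
    rw [conj_malm n l hl1 m θ, malmquist6]
    have hprod : (∏ j ∈ Finset.univ.filter (fun j : Fin n => j < k), blaschke6 (l j) (circ θ))
        = (∏ j ∈ S, blaschke6 (l j) (circ θ)) *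
          (∏ j ∈ Finset.univ.filter (fun j : Fin n => j < m), blaschke6 (l j) (circ θ)) :=
      (Finset.prod_sdiff hsub).symm
    have hne : ∀ j : Fin n, blaschke6 (l j) (circ θ) ≠ 0 := fun j =>
      blaschke_ne_zero (norm_circ θ) (den_ne (hl1 j) (le_of_eq (norm_circ θ)))
    have hpm : (∏ j ∈ Finset.univ.filter (fun j : Fin n => j < m),
        blaschke6 (l j) (circ θ)) ≠ 0 := Finset.prod_ne_zero_iff.mpr (fun j _ => hne j)
    have h2 : circ θ - l m ≠ 0 := circ_sub_ne (hl1 m) θ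
    rw [hG, hprod]
    show _ * wf (l k) (circ θ) * _ = _
    field_simp
  have hGdiff : ∀ z : ℂ, ‖z‖ ≤ 1 → DifferentiableAt ℂ G z := by
    intro z hz
    apply DifferentiableAt.const_mul
    apply DifferentiableAt.mul
    · exact (HasDerivAt.fun_finsetProd
        (f := fun (j : Fin n) w => blaschke6 (l j) w)
        (f' := fun j => bder (l j) z)
        (fun j _ => hasDerivAt_blaschke (den_ne (hl1 j) hz))).differentiableAt
    · exact diffAt_wf (den_ne (hl1 k) hz)
  rw [intervalIntegral.integral_congr (fun θ _ => point θ), cauchy G hGdiff (hl1 m)]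
  by_cases h : k = m
  · subst h
    have hpos : (0:ℝ) < 1 - ‖l k‖ ^ 2 := by nlinarith [norm_nonneg (l k), hl1 k]
    have hden : 1 - (starRingEnd ℂ) (l k) * l k = ((1 - ‖l k‖ ^ 2 : ℝ) : ℂ) := by
      rw [mul_comm, Complex.mul_conj]
      push_cast [Complex.normSq_eq_norm_sq]
      ring
    have hSe : S = ∅ := Finset.sdiff_self _
    have hGval : G (l k) = 1 := by
      rw [hG]
      simp only [hSe, Finset.prod_empty, one_mul, wf, hden]
      have hx : ((1 - ‖l k‖ ^ 2 : ℝ) : ℂ) ≠ 0 := by exact_mod_cast ne_of_gt hpos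
      rw [show ((Real.sqrt (1 - ‖l k‖ ^ 2) : ℝ) : ℂ) *
          (((Real.sqrt (1 - ‖l k‖ ^ 2) : ℝ) : ℂ) / ((1 - ‖l k‖ ^ 2 : ℝ) : ℂ))
          = ((Real.sqrt (1 - ‖l k‖ ^ 2) * Real.sqrt (1 - ‖l k‖ ^ 2) : ℝ) : ℂ) /
            ((1 - ‖l k‖ ^ 2 : ℝ) : ℂ) by push_cast; ring,
        Real.mul_self_sqrt hpos.le, div_self hx]
    rw [hGval, if_pos rfl, mul_one]
  · have hmk' : m < k := lt_of_le_of_ne hmk (fun e => h e.symm)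
    have hmem : m ∈ S := by
      rw [hS, Finset.mem_sdiff]
      constructor
      · simp only [Finset.mem_filter]; exact ⟨Finset.mem_univ m, hmk'⟩
      · simp only [Finset.mem_filter]
        intro hc
        exact lt_irrefl m hc.2
    have hb0 : blaschke6 (l m) (l m) = 0 := by rw [blaschke6, sub_self, zero_div]
    have hGval : G (l m) = 0 := by
      simp only [hG]
      rw [Finset.prod_eq_zero (f := fun j => blaschke6 (l j) (l m)) hmem hb0]
      simp
    rw [hGval, if_neg h, mul_zero]

lemma intervalIntegral_conj {u : ℝ → ℂ} {a b : ℝ} :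
    ∫ θ in a..b, (starRingEnd ℂ) (u θ) = (starRingEnd ℂ) (∫ θ in a..b, u θ) := by
  simp only [intervalIntegral, integral_conj, map_sub]

lemma orth (n : ℕ) (l : Fin n → ℂ) {r : ℝ} (hr : r < 1) (hl : ∀ j, ‖l j‖ ≤ r)
    (k m : Fin n) :
    ∫ θ in (0:ℝ)..(2*Real.pi),
        malmquist6 n l k (circ θ) * (starRingEnd ℂ) (malmquist6 n l m (circ θ))
      = if k = m then ((2*Real.pi : ℝ) : ℂ) else 0 := by
  rcases le_or_gt m k with hmk | hkm
  · exact orth_le n l hr hl k m hmk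
  · have h1 := orth_le n l hr hl m k (le_of_lt hkm)
    have hpt : ∀ θ : ℝ, malmquist6 n l k (circ θ) *
        (starRingEnd ℂ) (malmquist6 n l m (circ θ))
        = (starRingEnd ℂ) (malmquist6 n l m (circ θ) *
            (starRingEnd ℂ) (malmquist6 n l k (circ θ))) := by
      intro θ
      rw [map_mul, Complex.conj_conj]
      ring
    have h2 : ¬ (m = k) := by
      intro e
      rw [e] at hkm
      exact lt_irrefl _ hkm
    have h3 : ¬ (k = m) := fun e => h2 e.symm
    rw [intervalIntegral.integral_congr (fun θ _ => hpt θ), intervalIntegral_conj, h1,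
      if_neg h2, if_neg h3, map_zero]


lemma cont_den (a : ℂ) : Continuous fun θ => 1 - (starRingEnd ℂ) a * circ θ :=
  continuous_const.sub (continuous_const.mul cont_circ)

lemma cont_blaschke {a : ℂ} (ha : ‖a‖ < 1) : Continuous fun θ => blaschke6 a (circ θ) := by
  apply Continuous.div (continuous_const.sub cont_circ) (cont_den a)
  intro θ
  exact den_ne ha (le_of_eq (norm_circ θ))

lemma cont_wf {a : ℂ} (ha : ‖a‖ < 1) : Continuous fun θ => wf a (circ θ) := by
  apply Continuous.div continuous_const (cont_den a)
  intro θ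
  exact den_ne ha (le_of_eq (norm_circ θ))

lemma cont_bder {a : ℂ} (ha : ‖a‖ < 1) : Continuous fun θ => bder a (circ θ) := by
  apply Continuous.div continuous_const ((cont_den a).pow 2)
  intro θ
  exact pow_ne_zero 2 (den_ne ha (le_of_eq (norm_circ θ)))

lemma cont_wder {a : ℂ} (ha : ‖a‖ < 1) : Continuous fun θ => wder a (circ θ) := by
  apply Continuous.div continuous_const ((cont_den a).pow 2)
  intro θ
  exact pow_ne_zero 2 (den_ne ha (le_of_eq (norm_circ θ)))

lemma cont_prod (n : ℕ) (l : Fin n → ℂ) (hl : ∀ j, ‖l j‖ < 1) (s : Finset (Fin n)) :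
    Continuous fun θ => ∏ j ∈ s, blaschke6 (l j) (circ θ) :=
  continuous_finset_prod s (fun j _ => cont_blaschke (hl j))

lemma cont_malm (n : ℕ) (l : Fin n → ℂ) (hl : ∀ j, ‖l j‖ < 1) (k : Fin n) :
    Continuous fun θ => malmquist6 n l k (circ θ) := by
  show Continuous fun θ =>
    (∏ j ∈ Finset.univ.filter (fun j => j < k), blaschke6 (l j) (circ θ)) * wf (l k) (circ θ)
  exact (cont_prod n l hl _).mul (cont_wf (hl k))

lemma parseval (n : ℕ) (l : Fin n → ℂ) {r : ℝ} (hr : r < 1) (hl : ∀ j, ‖l j‖ ≤ r)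
    (d : Fin n → ℂ) :
    (1/(2*Real.pi)) * ∫ θ in (0:ℝ)..(2*Real.pi),
        ‖∑ k, d k * malmquist6 n l k (circ θ)‖^2 = ∑ k, ‖d k‖^2 := by
  have hl1 : ∀ j, ‖l j‖ < 1 := fun j => lt_of_le_of_lt (hl j) hr
  have hcont : ∀ k : Fin n, Continuous fun θ => malmquist6 n l k (circ θ) :=
    fun k => cont_malm n l hl1 k
  set u : ℝ → ℂ := fun θ => ∑ k, d k * malmquist6 n l k (circ θ) with hu
  have hintg : ∀ k m : Fin n, IntervalIntegrable (fun θ =>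
      (d k * (starRingEnd ℂ) (d m)) * (malmquist6 n l k (circ θ) *
        (starRingEnd ℂ) (malmquist6 n l m (circ θ)))) MeasureTheory.volume 0 (2*Real.pi) := by
    intro k m
    apply Continuous.intervalIntegrable
    exact continuous_const.mul ((hcont k).mul (continuous_star.comp (hcont m)))
  have key : (∫ θ in (0:ℝ)..(2*Real.pi), (u θ * (starRingEnd ℂ) (u θ)))
      = ((2*Real.pi : ℝ) : ℂ) * ∑ k, (d k * (starRingEnd ℂ) (d k)) := by
    have hpt : ∀ θ : ℝ, u θ * (starRingEnd ℂ) (u θ)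
        = ∑ k, ∑ m, (d k * (starRingEnd ℂ) (d m)) *
            (malmquist6 n l k (circ θ) * (starRingEnd ℂ) (malmquist6 n l m (circ θ))) := by
      intro θ
      rw [hu]
      simp only [map_sum, map_mul]
      rw [Finset.sum_mul_sum]
      apply Finset.sum_congr rfl
      intro k _
      apply Finset.sum_congr rfl
      intro m _
      ring
    rw [intervalIntegral.integral_congr (fun θ _ => hpt θ)]
    rw [intervalIntegral.integral_finset_sum (fun k _ => by
      apply Continuous.intervalIntegrable
      apply continuous_finset_sum
      intro m _
      exact continuous_const.mul ((hcont k).mul (continuous_star.comp (hcont m))))]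
    have h2 : ∀ k : Fin n, (∫ θ in (0:ℝ)..(2*Real.pi),
        ∑ m, (d k * (starRingEnd ℂ) (d m)) * (malmquist6 n l k (circ θ) *
          (starRingEnd ℂ) (malmquist6 n l m (circ θ))))
        = ∑ m, (d k * (starRingEnd ℂ) (d m)) *
            (if k = m then ((2*Real.pi : ℝ) : ℂ) else 0) := by
      intro k
      rw [intervalIntegral.integral_finset_sum (fun m _ => hintg k m)]
      apply Finset.sum_congr rfl
      intro m _
      rw [intervalIntegral.integral_const_mul, orth n l hr hl k m]
    rw [Finset.sum_congr rfl (fun k _ => h2 k), Finset.mul_sum]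
    apply Finset.sum_congr rfl
    intro k _
    rw [Finset.sum_eq_single k]
    · rw [if_pos rfl]
      ring
    · intro m _ hm
      rw [if_neg (fun e => hm e.symm), mul_zero]
    · intro hk
      exact absurd (Finset.mem_univ k) hk
  have h3 : ∀ θ : ℝ, ((‖u θ‖^2 : ℝ) : ℂ) = u θ * (starRingEnd ℂ) (u θ) := by
    intro θ
    rw [Complex.mul_conj]
    norm_cast
    rw [Complex.normSq_eq_norm_sq]
  have h4 : ∀ k : Fin n, d k * (starRingEnd ℂ) (d k) = ((‖d k‖^2 : ℝ) : ℂ) := by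
    intro k
    rw [Complex.mul_conj]
    norm_cast
    rw [Complex.normSq_eq_norm_sq]
  have key2 : (∫ θ in (0:ℝ)..(2*Real.pi), ((‖u θ‖^2 : ℝ) : ℂ))
      = ((2*Real.pi : ℝ) : ℂ) * ∑ k, ((‖d k‖^2 : ℝ) : ℂ) := by
    rw [intervalIntegral.integral_congr (fun θ _ => h3 θ), key,
      Finset.sum_congr rfl (fun k _ => h4 k)]
  rw [intervalIntegral.integral_ofReal] at key2
  have key3 : (∫ θ in (0:ℝ)..(2*Real.pi), ‖u θ‖^2) = (2*Real.pi) * ∑ k, ‖d k‖^2 := by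
    exact_mod_cast key2
  rw [key3]
  have hpi : (2*Real.pi) ≠ 0 := by positivity
  field_simp


noncomputable def NN (u : ℝ → ℂ) : ℝ :=
  Real.sqrt ((1/(2*Real.pi)) * ∫ θ in (0:ℝ)..(2*Real.pi), ‖u θ‖^2)

lemma J_nonneg (u : ℝ → ℂ) : 0 ≤ ∫ θ in (0:ℝ)..(2*Real.pi), ‖u θ‖^2 :=
  intervalIntegral.integral_nonneg (by positivity) (fun x _ => by positivity)

lemma NN_eq (u : ℝ → ℂ) : NN u = Real.sqrt (1/(2*Real.pi)) *
    Real.sqrt (∫ θ in (0:ℝ)..(2*Real.pi), ‖u θ‖^2) := by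
  rw [NN, Real.sqrt_mul (by positivity)]

lemma cs (u v : ℝ → ℂ) (hu : Continuous u) (hv : Continuous v) :
    (∫ θ in (0:ℝ)..(2*Real.pi), ‖u θ‖ * ‖v θ‖)
      ≤ Real.sqrt (∫ θ in (0:ℝ)..(2*Real.pi), ‖u θ‖^2) *
        Real.sqrt (∫ θ in (0:ℝ)..(2*Real.pi), ‖v θ‖^2) := by
  set A := ∫ θ in (0:ℝ)..(2*Real.pi), ‖u θ‖^2 with hA
  set B := ∫ θ in (0:ℝ)..(2*Real.pi), ‖v θ‖^2 with hB
  set S := ∫ θ in (0:ℝ)..(2*Real.pi), ‖u θ‖ * ‖v θ‖ with hS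
  have hint1 : IntervalIntegrable (fun θ => ‖u θ‖^2) MeasureTheory.volume 0 (2*Real.pi) :=
    ((hu.norm.pow 2)).intervalIntegrable _ _
  have hint2 : IntervalIntegrable (fun θ => ‖v θ‖^2) MeasureTheory.volume 0 (2*Real.pi) :=
    ((hv.norm.pow 2)).intervalIntegrable _ _
  have hint3 : IntervalIntegrable (fun θ => ‖u θ‖ * ‖v θ‖) MeasureTheory.volume 0 (2*Real.pi) :=
    (hu.norm.mul hv.norm).intervalIntegrable _ _
  have quad : ∀ t : ℝ, 0 ≤ A * (t*t) + (2*S) * t + B := by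
    intro t
    have h0 : 0 ≤ ∫ θ in (0:ℝ)..(2*Real.pi), (t*‖u θ‖ + ‖v θ‖)^2 :=
      intervalIntegral.integral_nonneg (by positivity) (fun x _ => by positivity)
    have hexp : ∀ θ : ℝ, (t*‖u θ‖ + ‖v θ‖)^2
        = ((t*t)*‖u θ‖^2 + (2*t)*(‖u θ‖*‖v θ‖)) + ‖v θ‖^2 := fun θ => by ring
    rw [intervalIntegral.integral_congr (fun θ _ => hexp θ),
      intervalIntegral.integral_add ((hint1.const_mul (t*t)).add (hint3.const_mul (2*t))) hint2,
      intervalIntegral.integral_add (hint1.const_mul (t*t)) (hint3.const_mul (2*t)),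
      intervalIntegral.integral_const_mul, intervalIntegral.integral_const_mul] at h0
    nlinarith [h0]
  have hd := discrim_le_zero quad
  rw [discrim] at hd
  have hA0 : 0 ≤ A := J_nonneg u
  have hB0 : 0 ≤ B := J_nonneg v
  have hS0 : 0 ≤ S :=
    intervalIntegral.integral_nonneg (by positivity) (fun x _ => by positivity)
  have hS2 : S^2 ≤ A*B := by nlinarith [hd]
  calc S ≤ Real.sqrt (A*B) := by
        rw [← Real.sqrt_sq hS0]
        exact Real.sqrt_le_sqrt hS2
    _ = Real.sqrt A * Real.sqrt B := Real.sqrt_mul hA0 B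

lemma NN_add (u v : ℝ → ℂ) (hu : Continuous u) (hv : Continuous v) :
    NN (fun θ => u θ + v θ) ≤ NN u + NN v := by
  set A := ∫ θ in (0:ℝ)..(2*Real.pi), ‖u θ‖^2 with hA
  set B := ∫ θ in (0:ℝ)..(2*Real.pi), ‖v θ‖^2 with hB
  have hA0 : 0 ≤ A := J_nonneg u
  have hB0 : 0 ≤ B := J_nonneg v
  have hint1 : IntervalIntegrable (fun θ => ‖u θ‖^2) MeasureTheory.volume 0 (2*Real.pi) :=
    ((hu.norm.pow 2)).intervalIntegrable _ _
  have hint2 : IntervalIntegrable (fun θ => ‖v θ‖^2) MeasureTheory.volume 0 (2*Real.pi) :=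
    ((hv.norm.pow 2)).intervalIntegrable _ _
  have hint3 : IntervalIntegrable (fun θ => ‖u θ‖ * ‖v θ‖) MeasureTheory.volume 0 (2*Real.pi) :=
    (hu.norm.mul hv.norm).intervalIntegrable _ _
  have h1 : (∫ θ in (0:ℝ)..(2*Real.pi), ‖u θ + v θ‖^2)
      ≤ (Real.sqrt A + Real.sqrt B)^2 := by
    have step1 : (∫ θ in (0:ℝ)..(2*Real.pi), ‖u θ + v θ‖^2)
        ≤ ∫ θ in (0:ℝ)..(2*Real.pi), (((1:ℝ)*‖u θ‖^2 + 2*(‖u θ‖*‖v θ‖)) + ‖v θ‖^2) := by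
      apply intervalIntegral.integral_mono_on (by positivity)
        (((hu.add hv).norm.pow 2).intervalIntegrable _ _)
        (((hint1.const_mul 1).add (hint3.const_mul 2)).add hint2)
      intro x _
      show ‖u x + v x‖ ^ 2 ≤ 1 * ‖u x‖ ^ 2 + 2 * (‖u x‖ * ‖v x‖) + ‖v x‖ ^ 2
      have := norm_add_le (u x) (v x)
      nlinarith [norm_nonneg (u x), norm_nonneg (v x), norm_nonneg (u x + v x)]
    rw [intervalIntegral.integral_add ((hint1.const_mul 1).add (hint3.const_mul 2))
        hint2,
      intervalIntegral.integral_add (hint1.const_mul 1) (hint3.const_mul 2),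
      intervalIntegral.integral_const_mul, intervalIntegral.integral_const_mul] at step1
    have hcs := cs u v hu hv
    have hsq : (Real.sqrt A + Real.sqrt B)^2 = A + 2*(Real.sqrt A * Real.sqrt B) + B := by
      rw [add_sq, Real.sq_sqrt hA0, Real.sq_sqrt hB0]
      ring
    rw [hsq]
    rw [← hA, ← hB] at step1
    linarith [step1, hcs]
  rw [NN_eq, NN_eq, NN_eq, ← hA, ← hB, ← mul_add]
  apply mul_le_mul_of_nonneg_left _ (Real.sqrt_nonneg _)
  calc Real.sqrt (∫ θ in (0:ℝ)..(2*Real.pi), ‖u θ + v θ‖^2)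
      ≤ Real.sqrt ((Real.sqrt A + Real.sqrt B)^2) := Real.sqrt_le_sqrt h1
    _ = Real.sqrt A + Real.sqrt B := Real.sqrt_sq (by positivity)

lemma NN_zero : NN (fun _ => (0:ℂ)) = 0 := by
  simp [NN]

lemma NN_sum {ι : Type*} (s : Finset ι) (w : ι → ℝ → ℂ) (hw : ∀ i ∈ s, Continuous (w i)) :
    NN (fun θ => ∑ i ∈ s, w i θ) ≤ ∑ i ∈ s, NN (w i) := by
  classical
  induction s using Finset.cons_induction with
  | empty => simp [NN]
  | cons i s hi ih =>
    simp only [Finset.sum_cons]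
    refine le_trans (NN_add _ _ (hw i (Finset.mem_cons_self i s))
      (continuous_finset_sum _ (fun j hj => hw j (Finset.mem_cons_of_mem hj)))) ?_
    exact add_le_add le_rfl (ih (fun j hj => hw j (Finset.mem_cons_of_mem hj)))

lemma NN_mono (u v : ℝ → ℂ) (C : ℝ) (hu : Continuous u) (hv : Continuous v) (hC : 0 ≤ C)
    (h : ∀ θ, ‖u θ‖ ≤ C * ‖v θ‖) : NN u ≤ C * NN v := by
  have h1 : (∫ θ in (0:ℝ)..(2*Real.pi), ‖u θ‖^2)
      ≤ ∫ θ in (0:ℝ)..(2*Real.pi), C^2 * ‖v θ‖^2 := by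
    apply intervalIntegral.integral_mono_on (by positivity)
      ((hu.norm.pow 2).intervalIntegrable _ _)
      (((hv.norm.pow 2).intervalIntegrable _ _).const_mul _)
    intro x _
    show ‖u x‖ ^ 2 ≤ C ^ 2 * ‖v x‖ ^ 2
    have := h x
    nlinarith [norm_nonneg (u x), norm_nonneg (v x)]
  rw [intervalIntegral.integral_const_mul] at h1
  rw [NN, NN]
  calc Real.sqrt ((1/(2*Real.pi)) * ∫ θ in (0:ℝ)..(2*Real.pi), ‖u θ‖^2)
      ≤ Real.sqrt (C^2 * ((1/(2*Real.pi)) * ∫ θ in (0:ℝ)..(2*Real.pi), ‖v θ‖^2)) := by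
        apply Real.sqrt_le_sqrt
        have hpi : (0:ℝ) < 1/(2*Real.pi) := by positivity
        calc (1/(2*Real.pi)) * ∫ θ in (0:ℝ)..(2*Real.pi), ‖u θ‖^2
            ≤ (1/(2*Real.pi)) * (C^2 * ∫ θ in (0:ℝ)..(2*Real.pi), ‖v θ‖^2) :=
              mul_le_mul_of_nonneg_left h1 hpi.le
          _ = C^2 * ((1/(2*Real.pi)) * ∫ θ in (0:ℝ)..(2*Real.pi), ‖v θ‖^2) := by ring
    _ = C * Real.sqrt ((1/(2*Real.pi)) * ∫ θ in (0:ℝ)..(2*Real.pi), ‖v θ‖^2) := by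
        rw [Real.sqrt_mul (sq_nonneg C), Real.sqrt_sq hC]


lemma norm_bder_le {a : ℂ} {r : ℝ} (hr : r < 1) (ha : ‖a‖ ≤ r) (θ : ℝ) :
    ‖bder a (circ θ)‖ ≤ 2/(1-r) := by
  have hx0 : 0 ≤ ‖a‖ := norm_nonneg a
  have hx1 : ‖a‖ < 1 := lt_of_le_of_lt ha hr
  have hD : 1 - ‖a‖ ≤ ‖1 - (starRingEnd ℂ) a * circ θ‖ := den_norm_ge (le_of_eq (norm_circ θ))
  have hD0 : 0 < 1 - ‖a‖ := by linarith
  have hDpos : 0 < ‖1 - (starRingEnd ℂ) a * circ θ‖ := lt_of_lt_of_le hD0 hD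
  have hnum : ‖(starRingEnd ℂ) a * a - 1‖ = 1 - ‖a‖^2 := by
    rw [mul_comm, Complex.mul_conj]
    rw [show ((Complex.normSq a : ℂ) - 1) = ((Complex.normSq a - 1 : ℝ) : ℂ) from by push_cast; ring]
    rw [Complex.norm_real, Real.norm_eq_abs]
    rw [Complex.normSq_eq_norm_sq]
    rw [abs_of_nonpos (by nlinarith)]
    ring
  rw [bder, norm_div, norm_pow, hnum]
  rw [div_le_div_iff₀ (by positivity) (by linarith)]
  have k3 : (1-‖a‖)*(1-‖a‖) ≤ ‖1 - (starRingEnd ℂ) a * circ θ‖ * ‖1 - (starRingEnd ℂ) a * circ θ‖ :=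
    mul_self_le_mul_self hD0.le hD
  nlinarith [k3, hD0, hx0, ha, hr]

lemma wder_le {a : ℂ} {r : ℝ} (hr0 : 0 ≤ r) (hr : r < 1) (ha : ‖a‖ ≤ r) (θ : ℝ) :
    ‖wder a (circ θ)‖ ≤ (r/(1-r)) * ‖wf a (circ θ)‖ := by
  have hs0 : 0 ≤ Real.sqrt (1 - ‖a‖^2) := Real.sqrt_nonneg _
  have hD : 1 - r ≤ ‖1 - (starRingEnd ℂ) a * circ θ‖ := by
    have := den_norm_ge (a := a) (le_of_eq (norm_circ θ))
    linarith [ha]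
  have hDpos : 0 < ‖1 - (starRingEnd ℂ) a * circ θ‖ := lt_of_lt_of_le (by linarith) hD
  rw [wder, wf, norm_div, norm_div, norm_mul, norm_pow, Complex.norm_real,
    Real.norm_eq_abs, _root_.abs_of_nonneg hs0, RCLike.norm_conj]
  have h1r : (0:ℝ) < 1 - r := by linarith
  have e1 : (r/(1-r)) * (Real.sqrt (1 - ‖a‖^2) / ‖1 - (starRingEnd ℂ) a * circ θ‖)
      = (r * Real.sqrt (1 - ‖a‖^2)) / ((1-r) * ‖1 - (starRingEnd ℂ) a * circ θ‖) := by
    field_simp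
  rw [e1, div_le_div_iff₀ (by positivity) (by positivity)]
  have k1 : ‖a‖*(1-r) ≤ r*‖1 - (starRingEnd ℂ) a * circ θ‖ := by nlinarith
  nlinarith [mul_le_mul_of_nonneg_left k1
    (show 0 ≤ Real.sqrt (1 - ‖a‖^2) * ‖1 - (starRingEnd ℂ) a * circ θ‖ by positivity)]

lemma norm_prod_blaschke (n : ℕ) (l : Fin n → ℂ) (hl1 : ∀ j, ‖l j‖ < 1)
    (s : Finset (Fin n)) (θ : ℝ) : ‖∏ j ∈ s, blaschke6 (l j) (circ θ)‖ = 1 := by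
  rw [norm_prod]
  rw [Finset.prod_congr rfl (fun j _ =>
    norm_blaschke (norm_circ θ) (den_ne (hl1 j) (le_of_eq (norm_circ θ))))]
  exact Finset.prod_const_one

lemma deriv_f_eq (n : ℕ) (l : Fin n → ℂ) {r : ℝ} (hr : r < 1) (hl : ∀ j, ‖l j‖ ≤ r)
    (f : ℂ → ℂ) (c : Fin n → ℂ)
    (hf : ∀ z : ℂ, ‖z‖ * r < 1 → f z = ∑ k, c k * malmquist6 n l k z) (θ : ℝ) :
    deriv f (circ θ) = ∑ k, c k * mder n l k (circ θ) := by
  have hU : IsOpen {z : ℂ | ‖z‖ * r < 1} :=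
    isOpen_lt (continuous_norm.mul continuous_const) continuous_const
  have hmem : circ θ ∈ {z : ℂ | ‖z‖ * r < 1} := by
    simp only [Set.mem_setOf_eq, norm_circ, one_mul]
    exact hr
  have heq : f =ᶠ[nhds (circ θ)] fun z => ∑ k, c k * malmquist6 n l k z :=
    Filter.eventually_of_mem (hU.mem_nhds hmem) (fun z hz => hf z hz)
  rw [Filter.EventuallyEq.deriv_eq heq]
  apply HasDerivAt.deriv
  apply HasDerivAt.fun_sum
  intro k _
  exact (hasDerivAt_malm n l k
    (fun j => den_ne (lt_of_le_of_lt (hl j) hr) (le_of_eq (norm_circ θ)))).const_mul (c k)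

lemma decomp (n : ℕ) (l c : Fin n → ℂ) (z : ℂ) :
    ∑ k, c k * mder n l k z
      = (∑ j, bder (l j) z * ∑ k, (if j < k then c k *
          ((∏ i ∈ (Finset.univ.filter (fun i => i < k)).erase j, blaschke6 (l i) z) * wf (l k) z)
          else 0))
        + ∑ k, c k * ((∏ j ∈ Finset.univ.filter (fun j => j < k), blaschke6 (l j) z) *
            wder (l k) z) := by
  have h1 : ∀ k : Fin n, c k * mder n l k z
      = (∑ j, if j < k then (c k * ((∏ i ∈ (Finset.univ.filter (fun i => i < k)).erase j,
          blaschke6 (l i) z) * wf (l k) z)) * bder (l j) z else 0)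
        + c k * ((∏ j ∈ Finset.univ.filter (fun j => j < k), blaschke6 (l j) z) * wder (l k) z) := by
    intro k
    rw [mder, mul_add]
    congr 1
    rw [Finset.sum_mul, Finset.mul_sum, ← Finset.sum_filter]
    apply Finset.sum_congr rfl
    intro j _
    ring
  rw [Finset.sum_congr rfl (fun k _ => h1 k), Finset.sum_add_distrib]
  congr 1
  rw [Finset.sum_comm]
  apply Finset.sum_congr rfl
  intro j _
  rw [Finset.mul_sum]
  apply Finset.sum_congr rfl
  intro k _
  split_ifs with h
  · ring
  · rw [mul_zero]

end Stmt6Aux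

open Stmt6Aux

/-- Bernstein-type inequality `‖f'‖_{H²} ≤ (3n/(1-r)) ‖f‖_{H²}`
for `f` in the model space `K_B` (= span of the Malmquist basis), where the
`H²` norms are realized as boundary integrals. -/
theorem stmt_6 (n : ℕ) (l : Fin n → ℂ) (r : ℝ) (hr0 : 0 ≤ r) (hr : r < 1)
    (hl : ∀ j, ‖l j‖ ≤ r) (f : ℂ → ℂ) (c : Fin n → ℂ)
    (hf : ∀ z : ℂ, ‖z‖ * r < 1 → f z = ∑ k, c k * malmquist6 n l k z) :
    Real.sqrt ((1 / (2 * Real.pi)) *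
        ∫ θ in (0:ℝ)..(2 * Real.pi),
          ‖deriv f (Complex.exp (θ * Complex.I))‖ ^ 2) ≤
      (3 * n / (1 - r)) *
        Real.sqrt ((1 / (2 * Real.pi)) *
          ∫ θ in (0:ℝ)..(2 * Real.pi),
            ‖f (Complex.exp (θ * Complex.I))‖ ^ 2) := by
  classical
  have hl1 : ∀ j, ‖l j‖ < 1 := fun j => lt_of_le_of_lt (hl j) hr
  have h1r : (0:ℝ) < 1 - r := by linarith
  set M := Real.sqrt (∑ k, ‖c k‖^2) with hM
  have hM0 : 0 ≤ M := Real.sqrt_nonneg _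
  have contIte : ∀ j k : Fin n, Continuous (fun θ => if j < k then c k *
      ((∏ i ∈ (Finset.univ.filter (fun i => i < k)).erase j, blaschke6 (l i) (circ θ)) *
        wf (l k) (circ θ)) else 0) := by
    intro j k
    by_cases h : j < k
    · simp only [if_pos h]
      exact continuous_const.mul ((cont_prod n l hl1 _).mul (cont_wf (hl1 k)))
    · simp only [if_neg h]
      exact continuous_const
  have contP : ∀ j : Fin n, Continuous (fun θ => bder (l j) (circ θ) *
      ∑ k, (if j < k then c k * ((∏ i ∈ (Finset.univ.filter (fun i => i < k)).erase j,
        blaschke6 (l i) (circ θ)) * wf (l k) (circ θ)) else 0)) := fun j =>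
    (cont_bder (hl1 j)).mul (continuous_finset_sum _ (fun k _ => contIte j k))
  have contQk : ∀ k : Fin n, Continuous (fun θ => c k *
      ((∏ j ∈ Finset.univ.filter (fun j => j < k), blaschke6 (l j) (circ θ)) *
        wder (l k) (circ θ))) := fun k =>
    continuous_const.mul ((cont_prod n l hl1 _).mul (cont_wder (hl1 k)))
  have contT : ∀ j : Fin n, Continuous (fun θ => ∑ k, (if j < k then c k else 0) *
      malmquist6 n l k (circ θ)) := fun j =>
    continuous_finset_sum _ (fun k _ => continuous_const.mul (cont_malm n l hl1 k))
  have hNe : ∀ k : Fin n, NN (fun θ => malmquist6 n l k (circ θ)) = 1 := by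
    intro k
    have hp := parseval n l hr hl (fun m => if m = k then (1:ℂ) else 0)
    simp only [ite_mul, one_mul, zero_mul, Finset.sum_ite_eq', Finset.mem_univ,
      if_true] at hp
    rw [NN, hp]
    rw [Finset.sum_eq_single k (fun m _ hm => by simp [hm])
      (fun hk => absurd (Finset.mem_univ k) hk)]
    simp
  have hT : ∀ j : Fin n, NN (fun θ => ∑ k, (if j < k then c k else 0) *
      malmquist6 n l k (circ θ)) ≤ M := by
    intro j
    rw [NN, parseval n l hr hl (fun k => if j < k then c k else 0), hM]
    apply Real.sqrt_le_sqrt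
    apply Finset.sum_le_sum
    intro k _
    split_ifs with h
    · exact le_refl _
    · simpa using sq_nonneg ‖c k‖
  have hPb : ∀ j : Fin n, NN (fun θ => bder (l j) (circ θ) *
      ∑ k, (if j < k then c k * ((∏ i ∈ (Finset.univ.filter (fun i => i < k)).erase j,
        blaschke6 (l i) (circ θ)) * wf (l k) (circ θ)) else 0)) ≤ (2/(1-r)) * M := by
    intro j
    have hpt : ∀ θ : ℝ, ‖bder (l j) (circ θ) * ∑ k, (if j < k then c k *
        ((∏ i ∈ (Finset.univ.filter (fun i => i < k)).erase j, blaschke6 (l i) (circ θ)) *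
          wf (l k) (circ θ)) else 0)‖
        ≤ (2/(1-r)) * ‖∑ k, (if j < k then c k else 0) * malmquist6 n l k (circ θ)‖ := by
      intro θ
      have hTj : (∑ k, (if j < k then c k else 0) * malmquist6 n l k (circ θ))
          = blaschke6 (l j) (circ θ) * ∑ k, (if j < k then c k *
              ((∏ i ∈ (Finset.univ.filter (fun i => i < k)).erase j, blaschke6 (l i) (circ θ)) *
                wf (l k) (circ θ)) else 0) := by
        rw [Finset.mul_sum]
        apply Finset.sum_congr rfl
        intro k _
        split_ifs with h
        · have hjk : j ∈ Finset.univ.filter (fun i : Fin n => i < k) := by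
            simp only [Finset.mem_filter]
            exact ⟨Finset.mem_univ j, h⟩
          rw [show malmquist6 n l k (circ θ) = (∏ i ∈ Finset.univ.filter
              (fun i : Fin n => i < k), blaschke6 (l i) (circ θ)) * wf (l k) (circ θ) from rfl,
            ← Finset.mul_prod_erase _ _ hjk]
          ring
        · rw [zero_mul, mul_zero]
      rw [hTj, norm_mul, norm_mul,
        norm_blaschke (norm_circ θ) (den_ne (hl1 j) (le_of_eq (norm_circ θ))), one_mul]
      exact mul_le_mul_of_nonneg_right (norm_bder_le hr (hl j) θ) (norm_nonneg _)
    calc NN (fun θ => bder (l j) (circ θ) *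
        ∑ k, (if j < k then c k * ((∏ i ∈ (Finset.univ.filter (fun i => i < k)).erase j,
          blaschke6 (l i) (circ θ)) * wf (l k) (circ θ)) else 0))
        ≤ (2/(1-r)) * NN (fun θ => ∑ k, (if j < k then c k else 0) *
            malmquist6 n l k (circ θ)) :=
          NN_mono _ _ _ (contP j) (contT j) (by positivity) hpt
      _ ≤ (2/(1-r)) * M := mul_le_mul_of_nonneg_left (hT j) (by positivity)
  have hQk : ∀ k : Fin n, NN (fun θ => c k *
      ((∏ j ∈ Finset.univ.filter (fun j => j < k), blaschke6 (l j) (circ θ)) *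
        wder (l k) (circ θ))) ≤ ‖c k‖ * (r/(1-r)) := by
    intro k
    have hpt : ∀ θ : ℝ, ‖c k * ((∏ j ∈ Finset.univ.filter (fun j => j < k),
        blaschke6 (l j) (circ θ)) * wder (l k) (circ θ))‖
        ≤ (‖c k‖ * (r/(1-r))) * ‖malmquist6 n l k (circ θ)‖ := by
      intro θ
      rw [norm_mul, norm_mul, norm_prod_blaschke n l hl1 _ θ, one_mul]
      rw [show malmquist6 n l k (circ θ) = (∏ i ∈ Finset.univ.filter
          (fun i : Fin n => i < k), blaschke6 (l i) (circ θ)) * wf (l k) (circ θ) from rfl,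
        norm_mul, norm_prod_blaschke n l hl1 _ θ, one_mul]
      calc ‖c k‖ * ‖wder (l k) (circ θ)‖
          ≤ ‖c k‖ * ((r/(1-r)) * ‖wf (l k) (circ θ)‖) :=
            mul_le_mul_of_nonneg_left (wder_le hr0 hr (hl k) θ) (norm_nonneg _)
        _ = (‖c k‖ * (r/(1-r))) * ‖wf (l k) (circ θ)‖ := by ring
    calc NN (fun θ => c k * ((∏ j ∈ Finset.univ.filter (fun j => j < k),
        blaschke6 (l j) (circ θ)) * wder (l k) (circ θ)))
        ≤ (‖c k‖ * (r/(1-r))) * NN (fun θ => malmquist6 n l k (circ θ)) :=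
          NN_mono _ _ _ (contQk k) (cont_malm n l hl1 k) (by positivity) hpt
      _ = ‖c k‖ * (r/(1-r)) := by rw [hNe k, mul_one]
  have hsum : ∑ k, ‖c k‖ ≤ Real.sqrt n * M := by
    have h := sq_sum_le_card_mul_sum_sq (s := (Finset.univ : Finset (Fin n)))
      (f := fun k => ‖c k‖)
    rw [Finset.card_univ, Fintype.card_fin] at h
    have h0 : (0:ℝ) ≤ ∑ k, ‖c k‖ := Finset.sum_nonneg (fun k _ => norm_nonneg _)
    calc ∑ k, ‖c k‖ = Real.sqrt ((∑ k, ‖c k‖)^2) := (Real.sqrt_sq h0).symm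
      _ ≤ Real.sqrt ((n:ℝ) * ∑ k, ‖c k‖^2) := Real.sqrt_le_sqrt h
      _ = Real.sqrt n * M := by rw [Real.sqrt_mul (by positivity), hM]
  have hfM : Real.sqrt ((1 / (2 * Real.pi)) * ∫ θ in (0:ℝ)..(2 * Real.pi),
      ‖f (Complex.exp (θ * Complex.I))‖ ^ 2) = M := by
    have hth : ∀ θ : ℝ, ‖f (circ θ)‖^2 = ‖∑ k, c k * malmquist6 n l k (circ θ)‖^2 := by
      intro θ
      rw [hf (circ θ) (by rw [norm_circ, one_mul]; exact hr)]
    rw [show (∫ θ in (0:ℝ)..(2 * Real.pi), ‖f (Complex.exp (θ * Complex.I))‖ ^ 2)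
        = ∫ θ in (0:ℝ)..(2 * Real.pi), ‖∑ k, c k * malmquist6 n l k (circ θ)‖ ^ 2 from
      intervalIntegral.integral_congr (fun θ _ => hth θ)]
    rw [parseval n l hr hl c, hM]
  rw [hfM]
  have hLHS : Real.sqrt ((1 / (2 * Real.pi)) * ∫ θ in (0:ℝ)..(2 * Real.pi),
      ‖deriv f (Complex.exp (θ * Complex.I))‖ ^ 2)
      = NN (fun θ => (∑ j, bder (l j) (circ θ) * ∑ k, (if j < k then c k *
          ((∏ i ∈ (Finset.univ.filter (fun i => i < k)).erase j, blaschke6 (l i) (circ θ)) *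
            wf (l k) (circ θ)) else 0))
        + ∑ k, c k * ((∏ j ∈ Finset.univ.filter (fun j => j < k), blaschke6 (l j) (circ θ)) *
            wder (l k) (circ θ))) := by
    rw [NN]
    congr 2
    apply intervalIntegral.integral_congr
    intro θ _
    show ‖deriv f (circ θ)‖^2 = _
    rw [deriv_f_eq n l hr hl f c hf θ, decomp n l c (circ θ)]
  rw [hLHS]
  have hsn : Real.sqrt (n:ℝ) ≤ (n:ℝ) := by
    rcases Nat.eq_zero_or_pos n with h | h
    · simp [h]
    · have h1 : (1:ℝ) ≤ (n:ℝ) := by exact_mod_cast h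
      nlinarith [Real.sq_sqrt (show (0:ℝ) ≤ (n:ℝ) by positivity), Real.sqrt_nonneg (n:ℝ)]
  have hrsn : r * Real.sqrt (n:ℝ) ≤ (n:ℝ) := by
    nlinarith [Real.sqrt_nonneg (n:ℝ)]
  calc NN (fun θ => (∑ j, bder (l j) (circ θ) * ∑ k, (if j < k then c k *
          ((∏ i ∈ (Finset.univ.filter (fun i => i < k)).erase j, blaschke6 (l i) (circ θ)) *
            wf (l k) (circ θ)) else 0))
        + ∑ k, c k * ((∏ j ∈ Finset.univ.filter (fun j => j < k), blaschke6 (l j) (circ θ)) *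
            wder (l k) (circ θ)))
      ≤ NN (fun θ => ∑ j, bder (l j) (circ θ) * ∑ k, (if j < k then c k *
          ((∏ i ∈ (Finset.univ.filter (fun i => i < k)).erase j, blaschke6 (l i) (circ θ)) *
            wf (l k) (circ θ)) else 0))
        + NN (fun θ => ∑ k, c k * ((∏ j ∈ Finset.univ.filter (fun j => j < k),
            blaschke6 (l j) (circ θ)) * wder (l k) (circ θ))) :=
        NN_add _ _ (continuous_finset_sum _ (fun j _ => contP j))
          (continuous_finset_sum _ (fun k _ => contQk k))
    _ ≤ (∑ j : Fin n, NN (fun θ => bder (l j) (circ θ) * ∑ k, (if j < k then c k *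
          ((∏ i ∈ (Finset.univ.filter (fun i => i < k)).erase j, blaschke6 (l i) (circ θ)) *
            wf (l k) (circ θ)) else 0)))
        + ∑ k : Fin n, NN (fun θ => c k * ((∏ j ∈ Finset.univ.filter (fun j => j < k),
            blaschke6 (l j) (circ θ)) * wder (l k) (circ θ))) :=
        add_le_add (NN_sum Finset.univ _ (fun j _ => contP j))
          (NN_sum Finset.univ _ (fun k _ => contQk k))
    _ ≤ (∑ _j : Fin n, (2/(1-r)) * M) + ∑ k : Fin n, ‖c k‖ * (r/(1-r)) :=
        add_le_add (Finset.sum_le_sum (fun j _ => hPb j))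
          (Finset.sum_le_sum (fun k _ => hQk k))
    _ = (n:ℝ) * ((2/(1-r)) * M) + (r/(1-r)) * ∑ k, ‖c k‖ := by
        rw [Finset.sum_const, Finset.card_univ, Fintype.card_fin, nsmul_eq_mul,
          ← Finset.sum_mul]
        ring
    _ ≤ (n:ℝ) * ((2/(1-r)) * M) + (r/(1-r)) * (Real.sqrt n * M) :=
        add_le_add le_rfl (mul_le_mul_of_nonneg_left hsum (by positivity))
    _ ≤ 3 * n / (1-r) * M := by
        have e2 : (n:ℝ) * ((2/(1-r)) * M) + (r/(1-r)) * (Real.sqrt n * M)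
            = ((2*n + r*Real.sqrt n)/(1-r)) * M := by
          field_simp
        rw [e2]
        apply mul_le_mul_of_nonneg_right _ hM0
        rw [div_le_div_iff₀ h1r h1r]
        nlinarith [mul_nonneg (show (0:ℝ) ≤ (n:ℝ) - r*Real.sqrt n by linarith) h1r.le]
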